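/- Let f = αx² + βxy + γy² be an integral primitive binary quadratic form with Δ(f) ≠ 0 and α > 0, and let T ∈ O_f(ℤ) with T ≠ ±I be an element of finite order. If det(T) = 1, then f is GL₂(ℤ)-equivalent to x² + y², to x² + xy + y², or to a form ax² + bxy − ay² for some integers a, b. If det(T) = −1, then f is GL₂(ℤ)-equivalent to xy, to x² − y², to a form ax² + cy², or to a form ax² + bxy + ay², for some integers a, b, c. -/

import Mathlib

/-- Value of the binary quadratic form `a x² + b xy + c y²`. -/
def qdval {R : Type*} [CommRing R] (a b c x y : R) : R :=
  a*x^2 + b*x*y + c*y^2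

/-- `GL₂(ℤ)`-equivalence of integral binary quadratic forms:
`g = ± f ∘ T` for some `T ∈ GL₂(ℤ)`. -/
def quadEquiv (a b c a' b' c' : ℤ) : Prop :=
  ∃ t1 t2 t3 t4 : ℤ, (t1*t4 - t2*t3 = 1 ∨ t1*t4 - t2*t3 = -1) ∧
    ((∀ x y : ℤ, qdval a' b' c' x y = qdval a b c (t1*x + t2*y) (t3*x + t4*y)) ∨
     (∀ x y : ℤ, qdval a' b' c' x y = -qdval a b c (t1*x + t2*y) (t3*x + t4*y)))


def useq (t d : ℤ) : ℕ → ℤ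
  | 0 => 0
  | 1 => 1
  | (k+2) => t * useq t d (k+1) - d * useq t d k

lemma useq_pow (t1 t2 t3 t4 : ℤ) (k : ℕ) :
    (!![t1,t2;t3,t4] : Matrix (Fin 2) (Fin 2) ℤ)^(k+1) =
    !![useq (t1+t4) (t1*t4-t2*t3) (k+1)*t1 - (t1*t4-t2*t3)*useq (t1+t4) (t1*t4-t2*t3) k,
       useq (t1+t4) (t1*t4-t2*t3) (k+1)*t2;
       useq (t1+t4) (t1*t4-t2*t3) (k+1)*t3,
       useq (t1+t4) (t1*t4-t2*t3) (k+1)*t4 - (t1*t4-t2*t3)*useq (t1+t4) (t1*t4-t2*t3) k] := by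
  induction k with
  | zero => simp [useq]
  | succ k ih =>
    rw [pow_succ, ih, Matrix.mul_fin_two]
    ext i j
    fin_cases i <;> fin_cases j <;> simp [useq] <;> ring

lemma useq_grow1 (t : ℤ) (ht : 2 ≤ t) : ∀ k : ℕ, 0 ≤ useq t 1 k ∧ useq t 1 k < useq t 1 (k+1) := by
  intro k
  induction k with
  | zero => simp [useq]
  | succ k ih =>
    obtain ⟨h0, h1⟩ := ih
    refine ⟨by omega, ?_⟩
    show useq t 1 (k+1) < t * useq t 1 (k+1) - 1 * useq t 1 k
    nlinarith

lemma useq_grow2 (t : ℤ) (ht : 1 ≤ t) : ∀ k : ℕ, 0 ≤ useq t (-1) k ∧ 1 ≤ useq t (-1) (k+1) := by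
  intro k
  induction k with
  | zero => simp [useq]
  | succ k ih =>
    obtain ⟨h0, h1⟩ := ih
    refine ⟨by omega, ?_⟩
    show 1 ≤ t * useq t (-1) (k+1) - (-1) * useq t (-1) k
    nlinarith

lemma useq_neg (t d : ℤ) : ∀ k : ℕ, useq (-t) d k = (-1)^(k+1) * useq t d k := by
  intro k
  induction k using Nat.strong_induction_on with
  | _ k ih =>
    match k with
    | 0 => simp [useq]
    | 1 => simp [useq]
    | (k+2) =>
      show -t * useq (-t) d (k+1) - d * useq (-t) d k = _
      rw [ih (k+1) (by omega), ih k (by omega)]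
      show _ = (-1)^(k+3) * (t * useq t d (k+1) - d * useq t d k)
      ring

lemma trace_classify (t1 t2 t3 t4 : ℤ)
    (hne1 : (!![t1, t2; t3, t4] : Matrix (Fin 2) (Fin 2) ℤ) ≠ 1)
    (hne2 : (!![t1, t2; t3, t4] : Matrix (Fin 2) (Fin 2) ℤ) ≠ -1)
    (hfin : ∃ n : ℕ, 0 < n ∧ (!![t1, t2; t3, t4] : Matrix (Fin 2) (Fin 2) ℤ)^n = 1) :
    (t1*t4 - t2*t3 = 1 → (t1+t4 = -1 ∨ t1+t4 = 0 ∨ t1+t4 = 1)) ∧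
    (t1*t4 - t2*t3 = -1 → t1 + t4 = 0) := by
  obtain ⟨n, hn, hTn⟩ := hfin
  obtain ⟨m, rfl⟩ : ∃ m, n = m+1 := ⟨n-1, by omega⟩
  rw [useq_pow] at hTn
  have e11 : useq (t1+t4) (t1*t4-t2*t3) (m+1)*t1 - (t1*t4-t2*t3)*useq (t1+t4) (t1*t4-t2*t3) m = 1 := by
    have := congrFun (congrFun hTn 0) 0; simpa using this
  have e12 : useq (t1+t4) (t1*t4-t2*t3) (m+1)*t2 = 0 := by
    have := congrFun (congrFun hTn 0) 1; simpa using this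
  have e21 : useq (t1+t4) (t1*t4-t2*t3) (m+1)*t3 = 0 := by
    have := congrFun (congrFun hTn 1) 0; simpa using this
  have e22 : useq (t1+t4) (t1*t4-t2*t3) (m+1)*t4 - (t1*t4-t2*t3)*useq (t1+t4) (t1*t4-t2*t3) m = 1 := by
    have := congrFun (congrFun hTn 1) 1; simpa using this
  by_cases hu : useq (t1+t4) (t1*t4-t2*t3) (m+1) = 0
  · have key : ∀ s : ℤ, ((t1*t4-t2*t3 = 1 ∧ 2 ≤ s) ∨ (t1*t4-t2*t3 = -1 ∧ 1 ≤ s)) →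
        (t1+t4 = s ∨ t1+t4 = -s) → False := by
      rintro s hs hts
      have hpos : 1 ≤ useq s (t1*t4-t2*t3) (m+1) := by
        rcases hs with ⟨hd, hs2⟩ | ⟨hd, hs2⟩
        · rw [hd]; have h0 := (useq_grow1 s hs2 m).1; have h1 := (useq_grow1 s hs2 m).2; omega
        · rw [hd]; exact (useq_grow2 s hs2 m).2
      rcases hts with h | h
      · rw [h] at hu; omega
      · rw [h, useq_neg] at hu
        rcases Nat.even_or_odd (m+1+1) with he | ho
        · rw [he.neg_one_pow] at hu; omega
        · rw [ho.neg_one_pow] at hu; omega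
    constructor
    · intro hd1
      by_contra hcon
      push_neg at hcon
      obtain ⟨h1, h2, h3⟩ := hcon
      rcases (by omega : 2 ≤ t1+t4 ∨ 2 ≤ -(t1+t4)) with h | h
      · exact key (t1+t4) (Or.inl ⟨hd1, h⟩) (Or.inl rfl)
      · exact key (-(t1+t4)) (Or.inl ⟨hd1, by omega⟩) (Or.inr (by ring))
    · intro hdm
      by_contra hcon
      rcases (by omega : 1 ≤ t1+t4 ∨ 1 ≤ -(t1+t4)) with h | h
      · exact key (t1+t4) (Or.inr ⟨hdm, h⟩) (Or.inl rfl)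
      · exact key (-(t1+t4)) (Or.inr ⟨hdm, by omega⟩) (Or.inr (by ring))
  · have ht2 : t2 = 0 := by rcases mul_eq_zero.mp e12 with h | h; exact absurd h hu; exact h
    have ht3 : t3 = 0 := by rcases mul_eq_zero.mp e21 with h | h; exact absurd h hu; exact h
    have ht14 : t1 = t4 := by
      have : useq (t1+t4) (t1*t4-t2*t3) (m+1) * (t1 - t4) = 0 := by linear_combination e11 - e22
      rcases mul_eq_zero.mp this with h | h; exact absurd h hu; omega
    constructor
    · intro hd1
      exfalso
      have hsq : t1 * t1 = 1 := by linear_combination hd1 - t1*ht14.symm + t2*ht3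
      rcases Int.eq_one_or_neg_one_of_mul_eq_one' hsq with ⟨h, _⟩ | ⟨h, _⟩
      · apply hne1
        have h4 : t4 = 1 := ht14 ▸ h
        subst ht2 ht3 h4 h
        ext i j; fin_cases i <;> fin_cases j <;> simp
      · apply hne2
        have h4 : t4 = -1 := ht14 ▸ h
        subst ht2 ht3 h4 h
        ext i j; fin_cases i <;> fin_cases j <;> simp
    · intro hdm
      exfalso
      have hsq : t4 * t4 = -1 := by linear_combination hdm + t4*ht14.symm + t2*ht3
      nlinarith [mul_self_nonneg t4]

lemma rep_one : ∀ n : ℕ, ∀ A B C : ℤ, A.toNat = n → 0 < A →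
    (B^2 - 4*A*C = -3 ∨ B^2 - 4*A*C = -4) → ∃ x y : ℤ, A*x^2 + B*x*y + C*y^2 = 1 := by
  intro n
  induction n using Nat.strong_induction_on with
  | _ n ih =>
    intro A B C hn hA hd
    by_cases hA1 : A = 1
    · exact ⟨1, 0, by rw [hA1]; ring⟩
    · have hA2 : 2 ≤ A := by omega
      set k : ℤ := -((B+A)/(2*A)) with hk
      set B' : ℤ := B + 2*A*k with hB'
      have hBmod : B' = (B+A) % (2*A) - A := by
        rw [hB', hk, Int.emod_def]; ring
      have h2A : (0:ℤ) < 2*A := by omega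
      have hlb : -A ≤ B' := by
        rw [hBmod]; have := Int.emod_nonneg (B+A) (by omega : (2*A) ≠ 0); omega
      have hub : B' < A := by
        rw [hBmod]; have := Int.emod_lt_of_pos (B+A) h2A; omega
      set C' : ℤ := A*k^2 + B*k + C with hC'
      have hd' : B'^2 - 4*C'*A = B^2 - 4*A*C := by rw [hB', hC']; ring
      have hB'sq : B'^2 ≤ A^2 := by nlinarith
      have hdval : B'^2 - 4*C'*A ≤ -3 ∧ -4 ≤ B'^2 - 4*C'*A := by
        rcases hd with h | h <;> constructor <;> linarith [hd']
      have hC'pos : 0 < C' := by nlinarith [sq_nonneg B', hdval.1]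
      have hC'lt : C' < A := by nlinarith [hB'sq, hdval.2]
      obtain ⟨x, y, hxy⟩ := ih C'.toNat (by omega) C' B' A (rfl) hC'pos
        (by rcases hd with h | h <;> [left; right] <;> linarith [hd'])
      exact ⟨y + k*x, x, by linear_combination hxy⟩

lemma rep_pm (A B C : ℤ) (hA : A ≠ 0)
    (hd : B^2 - 4*A*C = -3 ∨ B^2 - 4*A*C = -4) :
    ∃ x y : ℤ, A*x^2 + B*x*y + C*y^2 = 1 ∨ A*x^2 + B*x*y + C*y^2 = -1 := by
  rcases lt_or_gt_of_ne hA with h | h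
  · obtain ⟨x, y, hxy⟩ := rep_one (-A).toNat (-A) (-B) (-C) rfl (by omega)
      (by rcases hd with hh | hh <;> [left; right] <;> linarith)
    exact ⟨x, y, Or.inr (by linarith)⟩
  · obtain ⟨x, y, hxy⟩ := rep_one A.toNat A B C rfl h hd
    exact ⟨x, y, Or.inl hxy⟩

lemma quadEquiv_of (a b c p q r s A B C : ℤ)
    (hdet : p*s - q*r = 1 ∨ p*s - q*r = -1)
    (hA : A = a*p^2 + b*p*r + c*r^2)
    (hB : B = 2*a*p*q + b*(p*s + q*r) + 2*c*r*s)
    (hC : C = a*q^2 + b*q*s + c*s^2) :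
    quadEquiv a b c A B C := by
  refine ⟨p, q, r, s, hdet, Or.inl fun X Y => ?_⟩
  simp only [qdval, hA, hB, hC]; ring

lemma quadEquiv_of_neg (a b c p q r s A B C : ℤ)
    (hdet : p*s - q*r = 1 ∨ p*s - q*r = -1)
    (hA : A = -(a*p^2 + b*p*r + c*r^2))
    (hB : B = -(2*a*p*q + b*(p*s + q*r) + 2*c*r*s))
    (hC : C = -(a*q^2 + b*q*s + c*s^2)) :
    quadEquiv a b c A B C := by
  refine ⟨p, q, r, s, hdet, Or.inr fun X Y => ?_⟩
  simp only [qdval, hA, hB, hC]; ring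

lemma prim_trans (a b c p q r s : ℤ)
    (hdet : p*s - q*r = 1 ∨ p*s - q*r = -1)
    (hprim : Int.gcd (Int.gcd a b) c = 1) :
    Int.gcd (Int.gcd (a*p^2 + b*p*r + c*r^2) (2*a*p*q + b*(p*s + q*r) + 2*c*r*s))
      (a*q^2 + b*q*s + c*s^2) = 1 := by
  set A := a*p^2 + b*p*r + c*r^2 with hA
  set B := 2*a*p*q + b*(p*s + q*r) + 2*c*r*s with hB
  set C := a*q^2 + b*q*s + c*s^2 with hC
  set D : ℕ := Int.gcd (Int.gcd A B) C with hD
  have hDA : (D:ℤ) ∣ A := dvd_trans (Int.gcd_dvd_left _ _) (Int.gcd_dvd_left _ _)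
  have hDB : (D:ℤ) ∣ B := dvd_trans (Int.gcd_dvd_left _ _) (Int.gcd_dvd_right _ _)
  have hDC : (D:ℤ) ∣ C := Int.gcd_dvd_right _ _
  have ra : a = A*s^2 + B*(s*(-r)) + C*r^2 := by
    rcases hdet with h | h
    · rw [hA, hB, hC]; linear_combination (-a*(p*s - q*r + 1))*h
    · rw [hA, hB, hC]; linear_combination (-a*(p*s - q*r - 1))*h
  have rc : c = A*q^2 + B*(q*(-p)) + C*p^2 := by
    rcases hdet with h | h
    · rw [hA, hB, hC]; linear_combination (-c*(p*s - q*r + 1))*h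
    · rw [hA, hB, hC]; linear_combination (-c*(p*s - q*r - 1))*h
  have rabc : a + b + c = A*(s-q)^2 + B*((s-q)*(p-r)) + C*(p-r)^2 := by
    rcases hdet with h | h
    · rw [hA, hB, hC]; linear_combination (-(a+b+c)*(p*s - q*r + 1))*h
    · rw [hA, hB, hC]; linear_combination (-(a+b+c)*(p*s - q*r - 1))*h
  have hda : (D:ℤ) ∣ a := by
    rw [ra]; exact dvd_add (dvd_add (hDA.mul_right _) (hDB.mul_right _)) (hDC.mul_right _)
  have hdc : (D:ℤ) ∣ c := by
    rw [rc]; exact dvd_add (dvd_add (hDA.mul_right _) (hDB.mul_right _)) (hDC.mul_right _)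
  have hdabc : (D:ℤ) ∣ a + b + c := by
    rw [rabc]; exact dvd_add (dvd_add (hDA.mul_right _) (hDB.mul_right _)) (hDC.mul_right _)
  have hdb : (D:ℤ) ∣ b := by
    have : b = (a+b+c) - a - c := by ring
    rw [this]; exact dvd_sub (dvd_sub hdabc hda) hdc
  have : (D:ℤ) ∣ ((Int.gcd (Int.gcd a b) c : ℕ) : ℤ) :=
    Int.dvd_coe_gcd (Int.dvd_coe_gcd hda hdb) hdc
  rw [hprim] at this
  exact Nat.dvd_one.mp (by exact_mod_cast this)

theorem finite_order_in_orthogonal_group (a b c : ℤ)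
    (hprim : Int.gcd (Int.gcd a b) c = 1) (hdisc : b^2 - 4*a*c ≠ 0) (ha : 0 < a)
    (t1 t2 t3 t4 : ℤ)
    (hdet : t1*t4 - t2*t3 = 1 ∨ t1*t4 - t2*t3 = -1)
    (hO : (∀ x y : ℤ, qdval a b c (t1*x + t2*y) (t3*x + t4*y) = qdval a b c x y) ∨
          (∀ x y : ℤ, qdval a b c (t1*x + t2*y) (t3*x + t4*y) = -qdval a b c x y))
    (hne1 : (!![t1, t2; t3, t4] : Matrix (Fin 2) (Fin 2) ℤ) ≠ 1)
    (hne2 : (!![t1, t2; t3, t4] : Matrix (Fin 2) (Fin 2) ℤ) ≠ -1)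
    (hfin : ∃ n : ℕ, 0 < n ∧ (!![t1, t2; t3, t4] : Matrix (Fin 2) (Fin 2) ℤ)^n = 1) :
    (t1*t4 - t2*t3 = 1 →
      quadEquiv a b c 1 0 1 ∨ quadEquiv a b c 1 1 1 ∨
      ∃ a' b' : ℤ, quadEquiv a b c a' b' (-a')) ∧
    (t1*t4 - t2*t3 = -1 →
      quadEquiv a b c 0 1 0 ∨ quadEquiv a b c 1 0 (-1) ∨
      (∃ a' c' : ℤ, quadEquiv a b c a' 0 c') ∨
      (∃ a' b' : ℤ, quadEquiv a b c a' b' a')) := by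
  obtain ⟨htr1, htr2⟩ := trace_classify t1 t2 t3 t4 hne1 hne2 hfin
  simp only [qdval] at hO
  rcases hdet with hd1 | hdm
  · refine ⟨fun _ => ?_, fun h => absurd (hd1.symm.trans h) (by norm_num)⟩
    have htr := htr1 hd1
    have hq3 : t3 ≠ 0 := by
      intro h0
      have h14 : t1*t4 = 1 := by linear_combination hd1 + t2*h0
      rcases htr with h | h | h <;> nlinarith [sq_nonneg (t4-t1), h14]
    have hdq : (t4-t1)^2 - 4*t3*(-t2) = -3 ∨ (t4-t1)^2 - 4*t3*(-t2) = -4 := by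
      rcases htr with h | h | h
      · left; linear_combination -4*hd1 + (t1+t4-1)*h
      · right; linear_combination -4*hd1 + (t1+t4)*h
      · left; linear_combination -4*hd1 + (t1+t4+1)*h
    obtain ⟨x, y, hq⟩ := rep_pm t3 (t4-t1) (-t2) hq3 hdq
    have hdetP : x*(t3*x + t4*y) - (t1*x + t2*y)*y = 1 ∨
        x*(t3*x + t4*y) - (t1*x + t2*y)*y = -1 := by
      rcases hq with h | h
      · left; linear_combination h
      · right; linear_combination h
    rcases hO with hP | hM
    · -- f∘T = f
      have h1 := hP x y
      have e1 : t1*(t1*x+t2*y) + t2*(t3*x+t4*y) = (t1+t4)*(t1*x+t2*y) - x := by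
        linear_combination (-x)*hd1
      have e2 : t3*(t1*x+t2*y) + t4*(t3*x+t4*y) = (t1+t4)*(t3*x+t4*y) - y := by
        linear_combination (-y)*hd1
      have h2 := hP (t1*x+t2*y) (t3*x+t4*y)
      rw [e1, e2] at h2
      have e3 : t1*(x+(t1*x+t2*y)) + t2*(y+(t3*x+t4*y)) = (1+(t1+t4))*(t1*x+t2*y) - x := by
        linear_combination (-x)*hd1
      have e4 : t3*(x+(t1*x+t2*y)) + t4*(y+(t3*x+t4*y)) = (1+(t1+t4))*(t3*x+t4*y) - y := by
        linear_combination (-y)*hd1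
      have h3 := hP (x+(t1*x+t2*y)) (y+(t3*x+t4*y))
      rw [e3, e4] at h3
      have hbb : 2*(2*a*x*(t1*x+t2*y) + b*(x*(t3*x+t4*y) + (t1*x+t2*y)*y) + 2*c*y*(t3*x+t4*y))
          = 2*((t1+t4)*(a*x^2+b*x*y+c*y^2)) := by
        linear_combination h2 - h3 + (2*(t1+t4)+1)*h1
      have hb' : 2*a*x*(t1*x+t2*y) + b*(x*(t3*x+t4*y) + (t1*x+t2*y)*y) + 2*c*y*(t3*x+t4*y)
          = (t1+t4)*(a*x^2+b*x*y+c*y^2) := by linarith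
      have hcprim := prim_trans a b c x (t1*x+t2*y) y (t3*x+t4*y) hdetP hprim
      have hdvB : (a*x^2+b*x*y+c*y^2) ∣
          2*a*x*(t1*x+t2*y) + b*(x*(t3*x+t4*y) + (t1*x+t2*y)*y) + 2*c*y*(t3*x+t4*y) :=
        ⟨t1+t4, by linear_combination hb'⟩
      have hdvC : (a*x^2+b*x*y+c*y^2) ∣
          a*(t1*x+t2*y)^2 + b*(t1*x+t2*y)*(t3*x+t4*y) + c*(t3*x+t4*y)^2 :=
        ⟨1, by linear_combination h1⟩
      have hdv1 : (a*x^2+b*x*y+c*y^2) ∣ 1 := by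
        have h := Int.dvd_coe_gcd (Int.dvd_coe_gcd dvd_rfl hdvB) hdvC
        rw [hcprim] at h
        exact_mod_cast h
      rcases Int.isUnit_iff.mp (isUnit_of_dvd_one hdv1) with ha1 | ham1 <;>
        rcases htr with ht | ht | ht
      -- a' = 1 cases
      · -- t = -1 : x²+xy+y² with flipped second column
        refine Or.inr (Or.inl ?_)
        refine quadEquiv_of a b c x (-(t1*x+t2*y)) y (-(t3*x+t4*y)) 1 1 1 ?_ ?_ ?_ ?_
        · rcases hdetP with h | h
          · right; linear_combination -h
          · left; linear_combination -h
        · exact ha1.symm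
        · linear_combination hb' + (a*x^2+b*x*y+c*y^2)*ht - ha1
        · linear_combination -ha1 - h1
      · -- t = 0 : x²+y²
        refine Or.inl ?_
        refine quadEquiv_of a b c x (t1*x+t2*y) y (t3*x+t4*y) 1 0 1 hdetP ha1.symm ?_ ?_
        · linear_combination -hb' - (a*x^2+b*x*y+c*y^2)*ht
        · linear_combination -ha1 - h1
      · -- t = 1 : x²+xy+y²
        refine Or.inr (Or.inl ?_)
        refine quadEquiv_of a b c x (t1*x+t2*y) y (t3*x+t4*y) 1 1 1 hdetP ha1.symm ?_ ?_
        · linear_combination -hb' - (a*x^2+b*x*y+c*y^2)*ht - ha1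
        · linear_combination -ha1 - h1
      -- a' = -1 cases
      · refine Or.inr (Or.inl ?_)
        refine quadEquiv_of_neg a b c x (-(t1*x+t2*y)) y (-(t3*x+t4*y)) 1 1 1 ?_ ?_ ?_ ?_
        · rcases hdetP with h | h
          · right; linear_combination -h
          · left; linear_combination -h
        · linear_combination ham1
        · linear_combination -hb' - (a*x^2+b*x*y+c*y^2)*ht + ham1
        · linear_combination h1 + ham1
      · refine Or.inl ?_
        refine quadEquiv_of_neg a b c x (t1*x+t2*y) y (t3*x+t4*y) 1 0 1 hdetP ?_ ?_ ?_
        · linear_combination ham1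
        · linear_combination hb' + (a*x^2+b*x*y+c*y^2)*ht
        · linear_combination h1 + ham1
      · refine Or.inr (Or.inl ?_)
        refine quadEquiv_of_neg a b c x (t1*x+t2*y) y (t3*x+t4*y) 1 1 1 hdetP ?_ ?_ ?_
        · linear_combination ham1
        · linear_combination hb' + (a*x^2+b*x*y+c*y^2)*ht + ham1
        · linear_combination h1 + ham1
    · -- f∘T = -f : equivalent to a'x² + b'xy - a'y²
      refine Or.inr (Or.inr ⟨a*x^2+b*x*y+c*y^2,
        2*a*x*(t1*x+t2*y) + b*(x*(t3*x+t4*y) + (t1*x+t2*y)*y) + 2*c*y*(t3*x+t4*y), ?_⟩)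
      refine quadEquiv_of a b c x (t1*x+t2*y) y (t3*x+t4*y) _ _ _ hdetP rfl rfl ?_
      linear_combination -(hM x y)
  · refine ⟨fun h => absurd (hdm.symm.trans h) (by norm_num), fun _ => ?_⟩
    have ht : t1 + t4 = 0 := htr2 hdm
    -- find an integer vector fixed by T
    obtain ⟨P1, P2, hf1, hf2, hnz⟩ : ∃ P1 P2 : ℤ,
        t1*P1 + t2*P2 = P1 ∧ t3*P1 + t4*P2 = P2 ∧ ¬(P1 = 0 ∧ P2 = 0) := by
      by_cases hc : t1 = -1 ∧ t3 = 0
      · exact ⟨t2, t4+1, by linear_combination t2*ht, by linear_combination -hdm + t4*ht,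
          fun hz => by omega⟩
      · exact ⟨t1+1, t3, by linear_combination -hdm + t1*ht, by linear_combination t3*ht,
          fun hz => hc ⟨by omega, hz.2⟩⟩
    -- primitive fixed vector (p, r)
    have hGdvd1 : ((Int.gcd P1 P2 : ℕ) : ℤ) ∣ P1 := Int.gcd_dvd_left _ _
    have hGdvd2 : ((Int.gcd P1 P2 : ℕ) : ℤ) ∣ P2 := Int.gcd_dvd_right _ _
    obtain ⟨p, hp⟩ := hGdvd1
    obtain ⟨r, hr⟩ := hGdvd2
    have hGpos : 0 < Int.gcd P1 P2 := by
      rw [Int.gcd_pos_iff]; tauto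
    have hGne : ((Int.gcd P1 P2 : ℕ) : ℤ) ≠ 0 := by exact_mod_cast hGpos.ne'
    have hco : Int.gcd p r = 1 := by
      have h1 : Int.gcd (((Int.gcd P1 P2 : ℕ):ℤ)*p) (((Int.gcd P1 P2 : ℕ):ℤ)*r)
          = (Int.gcd P1 P2) * Int.gcd p r := by
        rw [Int.gcd_mul_left]; simp
      rw [← hp, ← hr] at h1
      have h2 : (Int.gcd P1 P2) * Int.gcd p r = (Int.gcd P1 P2) * 1 := by
        rw [mul_one, ← h1]
      exact Nat.eq_of_mul_eq_mul_left hGpos h2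
    have fu1 : t1*p + t2*r = p :=
      mul_left_cancel₀ hGne (by linear_combination hf1 + (1 - t1)*hp - t2*hr)
    have fu2 : t3*p + t4*r = r :=
      mul_left_cancel₀ hGne (by linear_combination hf2 + (1 - t4)*hr - t3*hp)
    obtain ⟨m, n, hmn⟩ := Int.isCoprime_iff_gcd_eq_one.mpr hco
    -- helper identities (T² = I entrywise)
    have hT11 : t1*t1 + t2*t3 = 1 := by linear_combination -hdm + t1*ht
    have hT12 : t1*t2 + t2*t4 = 0 := by linear_combination t2*ht
    have hT21 : t3*t1 + t4*t3 = 0 := by linear_combination t3*ht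
    have hT22 : t3*t2 + t4*t4 = 1 := by linear_combination -hdm + t4*ht
    -- the vector Q = (T+I)w where w = (-n, m)
    have fq1 : t1*(t1*(-n) + t2*m - n) + t2*(t3*(-n) + t4*m + m) = t1*(-n) + t2*m - n := by
      linear_combination (-n)*hT11 + m*hT12
    have fq2 : t3*(t1*(-n) + t2*m - n) + t4*(t3*(-n) + t4*m + m) = t3*(-n) + t4*m + m := by
      linear_combination (-n)*hT21 + m*hT22
    -- colinearity of Q with (p, r)
    have hcol : (t1*(-n) + t2*m - n)*r - (t3*(-n) + t4*m + m)*p = 0 := by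
      by_contra hne
      have z1 : (t1-1)*((t1*(-n) + t2*m - n)*r - (t3*(-n) + t4*m + m)*p) = 0 := by
        linear_combination r*fq1 - (t3*(-n) + t4*m + m)*fu1
      have z2 : t3*((t1*(-n) + t2*m - n)*r - (t3*(-n) + t4*m + m)*p) = 0 := by
        linear_combination r*fq2 - (t3*(-n) + t4*m + m)*fu2
      have z3 : t2*((t1*(-n) + t2*m - n)*r - (t3*(-n) + t4*m + m)*p) = 0 := by
        linear_combination (t1*(-n) + t2*m - n)*fu1 - p*fq1
      have z4 : (t4-1)*((t1*(-n) + t2*m - n)*r - (t3*(-n) + t4*m + m)*p) = 0 := by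
        linear_combination (t1*(-n) + t2*m - n)*fu2 - p*fq2
      have y1 : t1 - 1 = 0 := by rcases mul_eq_zero.mp z1 with h | h; exact h; exact absurd h hne
      have y2 : t3 = 0 := by rcases mul_eq_zero.mp z2 with h | h; exact h; exact absurd h hne
      have y3 : t2 = 0 := by rcases mul_eq_zero.mp z3 with h | h; exact h; exact absurd h hne
      have y4 : t4 - 1 = 0 := by rcases mul_eq_zero.mp z4 with h | h; exact h; exact absurd h hne
      have : t1*t4 - t2*t3 = 1 := by linear_combination t4*y1 + y4 - t3*y3
      omega
    -- Q = α · (p, r)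
    obtain ⟨al, k, rho, hal1, hal2, hrho, hk⟩ : ∃ al k rho : ℤ,
        al*p = t1*(-n) + t2*m - n ∧ al*r = t3*(-n) + t4*m + m ∧
        (rho = 0 ∨ rho = 1) ∧ al = 2*k + rho := by
      refine ⟨m*(t1*(-n) + t2*m - n) + n*(t3*(-n) + t4*m + m),
        (m*(t1*(-n) + t2*m - n) + n*(t3*(-n) + t4*m + m))/2,
        (m*(t1*(-n) + t2*m - n) + n*(t3*(-n) + t4*m + m))%2, ?_, ?_, by omega, by omega⟩
      · linear_combination (t1*(-n) + t2*m - n)*hmn - n*hcol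
      · linear_combination (t3*(-n) + t4*m + m)*hmn + m*hcol
    -- second basis vector w' = (-n - k*p, m - k*r)
    obtain ⟨w1, w2, hw1, hw2⟩ : ∃ w1 w2 : ℤ, w1 = -n - k*p ∧ w2 = m - k*r := ⟨_, _, rfl, rfl⟩
    have hdetw : p*w2 - w1*r = 1 := by
      rw [hw1, hw2]; linear_combination hmn
    have fw1 : t1*w1 + t2*w2 = rho*p - w1 := by
      rw [hw1, hw2]
      linear_combination -hal1 - k*fu1 + p*hk
    have fw2 : t3*w1 + t4*w2 = rho*r - w2 := by
      rw [hw1, hw2]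
      linear_combination -hal2 - k*fu2 + r*hk
    rcases hrho with hrho | hrho
    · -- T is conjugate to diag(1, -1)
      rw [hrho, zero_mul, zero_sub] at fw1 fw2
      rcases hO with hP | hM
      · -- b' = 0
        have eA : t1*(p+w1) + t2*(r+w2) = p - w1 := by linear_combination fu1 + fw1
        have eB : t3*(p+w1) + t4*(r+w2) = r - w2 := by linear_combination fu2 + fw2
        have h := hP (p+w1) (r+w2)
        rw [eA, eB] at h
        have hb0 : 2*(2*a*p*w1 + b*(p*w2 + w1*r) + 2*c*r*w2) = 0 := by linear_combination -h
        refine Or.inr (Or.inr (Or.inl ⟨a*p^2+b*p*r+c*r^2, a*w1^2+b*w1*w2+c*w2^2, ?_⟩))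
        exact quadEquiv_of a b c p w1 r w2 _ _ _ (Or.inl hdetw) rfl (by linarith) rfl
      · -- g = b'xy with b' = ±1
        have h1 := hM p r
        rw [fu1, fu2] at h1
        have ha0 : a*p^2 + b*p*r + c*r^2 = 0 := by linarith [h1]
        have h2 := hM w1 w2
        rw [fw1, fw2] at h2
        have hc0 : a*w1^2 + b*w1*w2 + c*w2^2 = 0 := by
          have : 2*(a*w1^2 + b*w1*w2 + c*w2^2) = 0 := by linear_combination h2
          linarith
        have hpg := prim_trans a b c p w1 r w2 (Or.inl hdetw) hprim
        rw [ha0, hc0] at hpg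
        rw [Int.gcd_zero_left, Int.gcd_zero_right] at hpg
        simp only [Int.natAbs_natCast] at hpg
        rcases Int.natAbs_eq_iff.mp hpg with hb1 | hbm1
        · refine Or.inl (quadEquiv_of a b c p w1 r w2 0 1 0 (Or.inl hdetw)
            ha0.symm ?_ hc0.symm)
          · exact_mod_cast hb1.symm
        · refine Or.inl (quadEquiv_of_neg a b c p w1 r w2 0 1 0 (Or.inl hdetw)
            (by linear_combination ha0) ?_ (by linear_combination hc0))
          · push_cast at hbm1
            linear_combination hbm1
    · -- T is conjugate to the swap matrix
      rw [hrho, one_mul] at fw1 fw2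
      have hdet2 : w1*(r-w2) - (p-w1)*w2 = -1 := by linear_combination -hdetw
      rcases hO with hP | hM
      · -- a' = c'
        have h := hP w1 w2
        rw [fw1, fw2] at h
        refine Or.inr (Or.inr (Or.inr ⟨a*w1^2+b*w1*w2+c*w2^2,
          2*a*w1*(p-w1) + b*(w1*(r-w2) + (p-w1)*w2) + 2*c*w2*(r-w2), ?_⟩))
        exact quadEquiv_of a b c w1 (p-w1) w2 (r-w2) _ _ _ (Or.inr hdet2) rfl rfl
          (by linear_combination -h)
      · -- g = a'(x² - y²) with a' = ±1
        have h1 := hM p r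
        rw [fu1, fu2] at h1
        have hfu0 : a*p^2 + b*p*r + c*r^2 = 0 := by linarith [h1]
        have h2 := hM w1 w2
        rw [fw1, fw2] at h2
        have hbq : 2*a*w1*(p-w1) + b*(w1*(r-w2) + (p-w1)*w2) + 2*c*w2*(r-w2) = 0 := by
          linear_combination hfu0 - h2
        have hpg := prim_trans a b c w1 (p-w1) w2 (r-w2) (Or.inr hdet2) hprim
        have hdvB : (a*w1^2+b*w1*w2+c*w2^2) ∣
            2*a*w1*(p-w1) + b*(w1*(r-w2) + (p-w1)*w2) + 2*c*w2*(r-w2) := ⟨0, by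
          rw [hbq]; ring⟩
        have hdvC : (a*w1^2+b*w1*w2+c*w2^2) ∣
            a*(p-w1)^2 + b*(p-w1)*(r-w2) + c*(r-w2)^2 := ⟨-1, by linear_combination h2⟩
        have hdv1 : (a*w1^2+b*w1*w2+c*w2^2) ∣ 1 := by
          have hh := Int.dvd_coe_gcd (Int.dvd_coe_gcd dvd_rfl hdvB) hdvC
          rw [hpg] at hh
          exact_mod_cast hh
        rcases Int.isUnit_iff.mp (isUnit_of_dvd_one hdv1) with ha1 | ham1
        · refine Or.inr (Or.inl (quadEquiv_of a b c w1 (p-w1) w2 (r-w2) 1 0 (-1)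
            (Or.inr hdet2) ha1.symm hbq.symm ?_))
          linear_combination -h2 + ha1
        · refine Or.inr (Or.inl (quadEquiv_of_neg a b c w1 (p-w1) w2 (r-w2) 1 0 (-1)
            (Or.inr hdet2) (by linear_combination ham1) (by linear_combination hbq) ?_))
          linear_combination h2 - ham1
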